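/- Let q be a prime power and let b be a positive integer. The vanishing ideal I of the F_q-rational points of the weighted projective plane P(1,1,b), i.e., the ideal of S = F_q[x₁,x₂,x₃] generated by all weighted-homogeneous polynomials (with respect to the grading deg x₁ = 1, deg x₂ = 1, deg x₃ = b) that vanish at every point of F_q³ ∖ {(0,0,0)}, is equal to the ideal generated by f₁ = x₂^{(q−1)b+1}x₃ − x₂x₃^q, f₂ = x₁^{(q−1)b+1}x₃ − x₁x₃^q, and f₃ = x₁^q x₂ − x₁x₂^q. -/

import Mathlib

open MvPolynomial

namespace P11B

/-! ### Exponent reduction -/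

/-- One-monomial exponent reduction for the relations of `ℙ(1,1,b)` over `F_q`. -/
def red (q b m0 m1 m2 : ℕ) : ℕ × ℕ × ℕ :=
  if 2 ≤ q ∧ q ≤ m2 ∧ 1 ≤ m1 then red q b m0 (m1 + (q-1)*b) (m2 - (q-1))
  else if 2 ≤ q ∧ q ≤ m2 ∧ 1 ≤ m0 then red q b (m0 + (q-1)*b) m1 (m2 - (q-1))
  else if 2 ≤ q ∧ q ≤ m0 ∧ 1 ≤ m1 then red q b (m0 - (q-1)) (m1 + (q-1)) m2
  else (m0, m1, m2)
termination_by (m2, m0)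
decreasing_by
  · apply Prod.Lex.left; omega
  · apply Prod.Lex.left; omega
  · apply Prod.Lex.right; omega

theorem red_deg (q b m0 m1 m2 : ℕ) :
    (red q b m0 m1 m2).1 + (red q b m0 m1 m2).2.1 + b * (red q b m0 m1 m2).2.2
      = m0 + m1 + b * m2 := by
  induction m0, m1, m2 using red.induct (q := q) (b := b) with
  | case1 m0 m1 m2 h ih =>
    rw [red, if_pos h, ih]
    obtain ⟨t, ht⟩ : ∃ t, m2 = t + (q - 1) := ⟨m2 - (q-1), by omega⟩
    subst ht
    simp only [Nat.add_sub_cancel]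
    ring
  | case2 m0 m1 m2 h1 h ih =>
    rw [red, if_neg h1, if_pos h, ih]
    obtain ⟨t, ht⟩ : ∃ t, m2 = t + (q - 1) := ⟨m2 - (q-1), by omega⟩
    subst ht
    simp only [Nat.add_sub_cancel]
    ring
  | case3 m0 m1 m2 h1 h2 h ih =>
    rw [red, if_neg h1, if_neg h2, if_pos h, ih]
    omega
  | case4 m0 m1 m2 h1 h2 h3 =>
    rw [red, if_neg h1, if_neg h2, if_neg h3]

theorem red_reduced (q b m0 m1 m2 : ℕ) :
    ¬(2 ≤ q ∧ q ≤ (red q b m0 m1 m2).2.2 ∧ 1 ≤ (red q b m0 m1 m2).2.1) ∧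
    ¬(2 ≤ q ∧ q ≤ (red q b m0 m1 m2).2.2 ∧ 1 ≤ (red q b m0 m1 m2).1) ∧
    ¬(2 ≤ q ∧ q ≤ (red q b m0 m1 m2).1 ∧ 1 ≤ (red q b m0 m1 m2).2.1) := by
  induction m0, m1, m2 using red.induct (q := q) (b := b) with
  | case1 m0 m1 m2 h ih => rw [red, if_pos h]; exact ih
  | case2 m0 m1 m2 h1 h ih => rw [red, if_neg h1, if_pos h]; exact ih
  | case3 m0 m1 m2 h1 h2 h ih => rw [red, if_neg h1, if_neg h2, if_pos h]; exact ih
  | case4 m0 m1 m2 h1 h2 h3 => rw [red, if_neg h1, if_neg h2, if_neg h3]; exact ⟨h1, h2, h3⟩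

/-! ### The candidate ideal and membership of reduction steps -/

variable {F : Type} [CommRing F]

/-- The candidate ideal. -/
noncomputable def Jb (F : Type) [CommRing F] (q b : ℕ) : Ideal (MvPolynomial (Fin 3) F) :=
  Ideal.span {X 1 ^ ((q - 1) * b + 1) * X 2 - X 1 * X 2 ^ q,
      X 0 ^ ((q - 1) * b + 1) * X 2 - X 0 * X 2 ^ q,
      X 0 ^ q * X 1 - X 0 * X 1 ^ q}

theorem g1_mem (q b : ℕ) : (X 1 ^ ((q - 1) * b + 1) * X 2 - X 1 * X 2 ^ q :
    MvPolynomial (Fin 3) F) ∈ Jb F q b := Ideal.subset_span (by simp)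

theorem g2_mem (q b : ℕ) : (X 0 ^ ((q - 1) * b + 1) * X 2 - X 0 * X 2 ^ q :
    MvPolynomial (Fin 3) F) ∈ Jb F q b := Ideal.subset_span (by simp)

theorem g3_mem (q b : ℕ) : (X 0 ^ q * X 1 - X 0 * X 1 ^ q :
    MvPolynomial (Fin 3) F) ∈ Jb F q b := Ideal.subset_span (by simp)

theorem step1 {q b m0 m1 m2 : ℕ} (h : 2 ≤ q ∧ q ≤ m2 ∧ 1 ≤ m1) :
    (X 0 ^ m0 * X 1 ^ m1 * X 2 ^ m2 : MvPolynomial (Fin 3) F) -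
      X 0 ^ m0 * X 1 ^ (m1 + (q-1)*b) * X 2 ^ (m2 - (q-1)) ∈ Jb F q b := by
  obtain ⟨e, he⟩ : ∃ e, q = e + 1 := ⟨q - 1, by omega⟩
  obtain ⟨s, hs⟩ : ∃ s, m1 = s + 1 := ⟨m1 - 1, by omega⟩
  obtain ⟨t, ht⟩ : ∃ t, m2 = t + 1 + e := ⟨m2 - q, by omega⟩
  subst he hs ht
  simp only [Nat.add_sub_cancel]
  have key : (X 0 ^ m0 * X 1 ^ (s+1) * X 2 ^ (t+1+e) : MvPolynomial (Fin 3) F) -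
      X 0 ^ m0 * X 1 ^ (s+1+e*b) * X 2 ^ (t+1) =
      (-(X 0 ^ m0 * X 1 ^ s * X 2 ^ t)) *
        (X 1 ^ (e*b+1) * X 2 - X 1 * X 2 ^ (e+1)) := by ring
  rw [key]
  have hg := g1_mem (F := F) (e+1) b
  simp only [Nat.add_sub_cancel] at hg
  exact Ideal.mul_mem_left _ _ hg

theorem step2 {q b m0 m1 m2 : ℕ} (h : 2 ≤ q ∧ q ≤ m2 ∧ 1 ≤ m0) :
    (X 0 ^ m0 * X 1 ^ m1 * X 2 ^ m2 : MvPolynomial (Fin 3) F) -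
      X 0 ^ (m0 + (q-1)*b) * X 1 ^ m1 * X 2 ^ (m2 - (q-1)) ∈ Jb F q b := by
  obtain ⟨e, he⟩ : ∃ e, q = e + 1 := ⟨q - 1, by omega⟩
  obtain ⟨s, hs⟩ : ∃ s, m0 = s + 1 := ⟨m0 - 1, by omega⟩
  obtain ⟨t, ht⟩ : ∃ t, m2 = t + 1 + e := ⟨m2 - q, by omega⟩
  subst he hs ht
  simp only [Nat.add_sub_cancel]
  have key : (X 0 ^ (s+1) * X 1 ^ m1 * X 2 ^ (t+1+e) : MvPolynomial (Fin 3) F) -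
      X 0 ^ (s+1+e*b) * X 1 ^ m1 * X 2 ^ (t+1) =
      (-(X 0 ^ s * X 1 ^ m1 * X 2 ^ t)) *
        (X 0 ^ (e*b+1) * X 2 - X 0 * X 2 ^ (e+1)) := by ring
  rw [key]
  have hg := g2_mem (F := F) (e+1) b
  simp only [Nat.add_sub_cancel] at hg
  exact Ideal.mul_mem_left _ _ hg

theorem step3 {q b m0 m1 m2 : ℕ} (h : 2 ≤ q ∧ q ≤ m0 ∧ 1 ≤ m1) :
    (X 0 ^ m0 * X 1 ^ m1 * X 2 ^ m2 : MvPolynomial (Fin 3) F) -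
      X 0 ^ (m0 - (q-1)) * X 1 ^ (m1 + (q-1)) * X 2 ^ m2 ∈ Jb F q b := by
  obtain ⟨e, he⟩ : ∃ e, q = e + 1 := ⟨q - 1, by omega⟩
  obtain ⟨s, hs⟩ : ∃ s, m1 = s + 1 := ⟨m1 - 1, by omega⟩
  obtain ⟨t, ht⟩ : ∃ t, m0 = t + 1 + e := ⟨m0 - q, by omega⟩
  subst he hs ht
  simp only [Nat.add_sub_cancel]
  have key : (X 0 ^ (t+1+e) * X 1 ^ (s+1) * X 2 ^ m2 : MvPolynomial (Fin 3) F) -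
      X 0 ^ (t+1) * X 1 ^ (s+1+e) * X 2 ^ m2 =
      (X 0 ^ t * X 1 ^ s * X 2 ^ m2) *
        (X 0 ^ (e+1) * X 1 - X 0 * X 1 ^ (e+1)) := by ring
  rw [key]
  exact Ideal.mul_mem_left _ _ (g3_mem (e+1) b)

theorem red_mem (q b m0 m1 m2 : ℕ) :
    (X 0 ^ m0 * X 1 ^ m1 * X 2 ^ m2 : MvPolynomial (Fin 3) F) -
      X 0 ^ (red q b m0 m1 m2).1 * X 1 ^ (red q b m0 m1 m2).2.1
        * X 2 ^ (red q b m0 m1 m2).2.2 ∈ Jb F q b := by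
  induction m0, m1, m2 using red.induct (q := q) (b := b) with
  | case1 m0 m1 m2 h ih =>
    rw [red, if_pos h]
    have h' := add_mem (step1 (F := F) (q := q) (b := b) (m0 := m0) (m1 := m1) (m2 := m2) h) ih
    rwa [sub_add_sub_cancel] at h'
  | case2 m0 m1 m2 h1 h ih =>
    rw [red, if_neg h1, if_pos h]
    have h' := add_mem (step2 (F := F) (q := q) (b := b) (m0 := m0) (m1 := m1) (m2 := m2) h) ih
    rwa [sub_add_sub_cancel] at h'
  | case3 m0 m1 m2 h1 h2 h ih =>
    rw [red, if_neg h1, if_neg h2, if_pos h]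
    have h' := add_mem (step3 (F := F) (q := q) (b := b) (m0 := m0) (m1 := m1) (m2 := m2) h) ih
    rwa [sub_add_sub_cancel] at h'
  | case4 m0 m1 m2 h1 h2 h3 =>
    rw [red, if_neg h1, if_neg h2, if_neg h3]
    simp

/-! ### Finsupp helpers -/

/-- Build a `Fin 3 →₀ ℕ` from a triple of naturals. -/
noncomputable def tr3 (p : ℕ × ℕ × ℕ) : Fin 3 →₀ ℕ :=
  Finsupp.equivFunOnFinite.symm ![p.1, p.2.1, p.2.2]

@[simp] theorem tr3_apply0 (p : ℕ × ℕ × ℕ) : tr3 p 0 = p.1 := rfl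
@[simp] theorem tr3_apply1 (p : ℕ × ℕ × ℕ) : tr3 p 1 = p.2.1 := rfl
@[simp] theorem tr3_apply2 (p : ℕ × ℕ × ℕ) : tr3 p 2 = p.2.2 := rfl

theorem monomial_eq_prod (m : Fin 3 →₀ ℕ) (c : F) :
    monomial m c = C c * (X 0 ^ m 0 * X 1 ^ m 1 * X 2 ^ m 2) := by
  rw [monomial_eq]
  congr 1
  rw [Finsupp.prod_fintype _ _ (fun i => pow_zero _)]
  simp [Fin.prod_univ_three]

theorem weight3 {b : ℕ} (u : Fin 3 →₀ ℕ) :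
    (Finsupp.weight ![1, 1, b]) u = u 0 + u 1 + b * u 2 := by
  rw [Finsupp.weight_apply, Finsupp.sum_fintype _ _ (fun i => by simp)]
  rw [Fin.sum_univ_three]
  simp [Matrix.cons_val_one, mul_comm]

/-! ### Weighted homogeneity of monomials -/

theorem wh_pow {b : ℕ} (i : Fin 3) (k : ℕ) :
    IsWeightedHomogeneous ![1, 1, b] ((X i : MvPolynomial (Fin 3) F) ^ k)
      (k * (![1, 1, b] : Fin 3 → ℕ) i) := by
  induction k with
  | zero => simpa using isWeightedHomogeneous_one F ![1, 1, b]
  | succ n ih =>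
    rw [pow_succ, Nat.succ_mul]
    exact ih.mul (isWeightedHomogeneous_X F ![1, 1, b] i)

/-! ### The key combinatorial lemma -/

end P11B

namespace P11B

variable {F : Type} [Field F] [Fintype F]

theorem key {q b d : ℕ} (hq : q = Fintype.card F) (hb : 0 < b)
    (G : MvPolynomial (Fin 3) F)
    (hdeg : ∀ u ∈ G.support, u 0 + u 1 + b * u 2 = d)
    (hred : ∀ u ∈ G.support, (q ≤ u 2 → u 0 = 0 ∧ u 1 = 0) ∧ (q ≤ u 0 → u 1 = 0))
    (hvan : ∀ y : Fin 3 → F, y ≠ 0 → eval y G = 0) : G = 0 := by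
  have hq2 : 2 ≤ q := hq ▸ Fintype.one_lt_card
  have hC1 : ∀ u ∈ G.support, ¬(u 0 = 0 ∧ u 1 = 0) := by
    rintro u hu ⟨h0, h1⟩
    have hy : (![0,0,1] : Fin 3 → F) ≠ 0 := by
      intro h
      have := congrFun h 2
      simp at this
    have hev := hvan _ hy
    rw [eval_eq'] at hev
    rw [Finset.sum_eq_single u] at hev
    · rw [Fin.prod_univ_three] at hev
      simp only [h0, h1, pow_zero, Matrix.cons_val_zero, Matrix.cons_val_one,
        Matrix.head_cons, one_pow, mul_one, one_mul] at hev
      · exact mem_support_iff.mp hu (by simpa using hev)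
    · intro m hm hne
      rw [Fin.prod_univ_three]
      by_cases hm0 : m 0 = 0
      · by_cases hm1 : m 1 = 0
        · exfalso
          apply hne
          have hd1 := hdeg m hm
          have hd2 := hdeg u hu
          rw [hm0, hm1] at hd1
          rw [h0, h1] at hd2
          have h22 : m 2 = u 2 := Nat.eq_of_mul_eq_mul_left hb (by omega)
          ext i
          fin_cases i
          · exact hm0.trans h0.symm
          · exact hm1.trans h1.symm
          · exact h22
        · simp [zero_pow hm1]
      · simp [zero_pow hm0]
    · intro h; exact absurd hu h
  have hlt2 : ∀ u ∈ G.support, u 2 < q := by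
    intro u hu
    by_contra h
    exact hC1 u hu ((hred u hu).1 (le_of_not_gt h))
  have hvall : ∀ y : Fin 3 → F, eval y G = 0 := by
    intro y
    rcases eq_or_ne y 0 with rfl | hy
    · rw [eval_eq']
      apply Finset.sum_eq_zero
      intro u hu
      rw [Fin.prod_univ_three]
      by_cases h0 : u 0 = 0
      · have h1 : u 1 ≠ 0 := fun h => hC1 u hu ⟨h0, h⟩
        simp [zero_pow h1]
      · simp [zero_pow h0]
    · exact hvan y hy
  set r : ℕ → ℕ := fun n => if n = 0 then 0 else (n - 1) % (q - 1) + 1 with hr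
  have hrle : ∀ n, r n ≤ q - 1 := by
    intro n
    rw [hr]
    dsimp only
    split
    · omega
    · have := Nat.mod_lt (n-1) (show 0 < q-1 by omega)
      omega
  have hrzero : ∀ n, r n = 0 ↔ n = 0 := by
    intro n
    rw [hr]
    dsimp only
    split <;> omega
  have hrlt : ∀ n, n < q → r n = n := by
    intro n hn
    rw [hr]
    dsimp only
    split
    · omega
    · rw [Nat.mod_eq_of_lt (by omega)]
      omega
  have hrpow : ∀ (a : F) (n : ℕ), a ^ r n = a ^ n := by
    intro a n
    by_cases hn : n = 0
    · subst hn; simp [hr]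
    by_cases ha : a = 0
    · subst ha
      rw [zero_pow hn, zero_pow]
      rw [Ne, hrzero]
      exact hn
    · have h1 : a ^ (q-1) = 1 := by
        rw [hq]; exact FiniteField.pow_card_sub_one_eq_one a ha
      obtain ⟨k, hk⟩ : ∃ k, n = r n + (q-1) * k := by
        refine ⟨(n-1)/(q-1), ?_⟩
        have hmd := Nat.mod_add_div (n-1) (q-1)
        have : r n = (n-1) % (q-1) + 1 := by rw [hr]; simp [hn]
        omega
      conv_rhs => rw [hk]
      rw [pow_add, pow_mul, h1, one_pow, mul_one]
  set ρ : (Fin 3 →₀ ℕ) → (Fin 3 →₀ ℕ) := fun u => tr3 (r (u 0), r (u 1), u 2) with hρ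
  set H : MvPolynomial (Fin 3) F := ∑ u ∈ G.support, monomial (ρ u) (coeff u G) with hH
  have hHsupp : ∀ s ∈ H.support, ∃ u ∈ G.support, ρ u = s := by
    intro s hs
    by_contra hcon
    push_neg at hcon
    apply mem_support_iff.mp hs
    rw [hH, coeff_sum]
    apply Finset.sum_eq_zero
    intro u hu
    rw [coeff_monomial, if_neg (hcon u hu)]
  have hHeval : ∀ y : Fin 3 → F, eval y H = 0 := by
    intro y
    rw [hH, map_sum]
    have hcongr : ∀ u ∈ G.support,
        eval y (monomial (ρ u) (coeff u G)) = coeff u G * ∏ i, y i ^ u i := by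
      intro u hu
      rw [eval_monomial]
      congr 1
      rw [Finsupp.prod_fintype _ _ (fun i => pow_zero _)]
      rw [Fin.prod_univ_three, Fin.prod_univ_three]
      rw [hρ]
      simp only [tr3_apply0, tr3_apply1, tr3_apply2]
      rw [hrpow, hrpow]
    rw [Finset.sum_congr rfl hcongr, ← eval_eq', hvall y]
  have hH0 : H = 0 := by
    apply eq_zero_of_eval_eq_zero (Fin 3) F H hHeval
    rw [← hq]
    rw [mem_restrictDegree]
    intro s hs i
    obtain ⟨u, hu, rfl⟩ := hHsupp s hs
    fin_cases i
    · simpa [hρ] using hrle (u 0)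
    · simpa [hρ] using hrle (u 1)
    · show (ρ u) 2 ≤ q - 1
      have := hlt2 u hu
      simp only [hρ, tr3_apply2]
      omega
  have hinj : ∀ m ∈ G.support, ∀ u ∈ G.support, ρ m = ρ u → m = u := by
    intro m hm u hu heq
    have e0 : r (m 0) = r (u 0) := by
      have := congrArg (fun f : Fin 3 →₀ ℕ => f 0) heq
      simpa [hρ] using this
    have e1 : r (m 1) = r (u 1) := by
      have := congrArg (fun f : Fin 3 →₀ ℕ => f 1) heq
      simpa [hρ] using this
    have e2 : m 2 = u 2 := by
      have := congrArg (fun f : Fin 3 →₀ ℕ => f 2) heq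
      simpa [hρ] using this
    have hs : m 0 + m 1 = u 0 + u 1 := by
      have hd1 := hdeg m hm
      have hd2 := hdeg u hu
      rw [e2] at hd1
      omega
    have h00 : m 0 = u 0 := by
      by_cases hm1 : m 1 = 0
      · have hu1 : u 1 = 0 := by
          rw [← hrzero, ← e1, hrzero]
          exact hm1
        omega
      · by_cases hu1 : u 1 = 0
        · have : m 1 = 0 := by rw [← hrzero, e1, hrzero]; exact hu1
          omega
        · have hmq : m 0 < q := by
            by_contra h
            exact hm1 ((hred m hm).2 (le_of_not_gt h))
          have huq : u 0 < q := by
            by_contra h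
            exact hu1 ((hred u hu).2 (le_of_not_gt h))
          rw [hrlt _ hmq, hrlt _ huq] at e0
          exact e0
    ext i
    fin_cases i
    · exact h00
    · show m 1 = u 1
      omega
    · exact e2
  by_contra hG
  obtain ⟨u, hu⟩ := Finset.nonempty_iff_ne_empty.mpr
    (fun h => hG (support_eq_empty.mp h))
  have hcoeff : coeff (ρ u) H = coeff u G := by
    rw [hH, coeff_sum, Finset.sum_eq_single u]
    · rw [coeff_monomial, if_pos rfl]
    · intro m hm hne
      rw [coeff_monomial, if_neg]
      exact fun heq => hne (hinj m hm u hu heq)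
    · intro h; exact absurd hu h
  rw [hH0] at hcoeff
  simp only [coeff_zero] at hcoeff
  exact mem_support_iff.mp hu hcoeff.symm

/-! ### Vanishing of the generators -/

theorem g1_vanish {q b : ℕ} (hq : q = Fintype.card F) (y : Fin 3 → F) :
    eval y (X 1 ^ ((q - 1) * b + 1) * X 2 - X 1 * X 2 ^ q : MvPolynomial (Fin 3) F) = 0 := by
  subst hq
  simp only [map_sub, map_mul, map_pow, eval_X]
  rw [FiniteField.pow_card, sub_eq_zero]
  by_cases h : y 1 = 0
  · rw [h, zero_pow (by omega), zero_mul]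
  · rw [pow_add, pow_one, pow_mul, FiniteField.pow_card_sub_one_eq_one _ h, one_pow, one_mul]

theorem g2_vanish {q b : ℕ} (hq : q = Fintype.card F) (y : Fin 3 → F) :
    eval y (X 0 ^ ((q - 1) * b + 1) * X 2 - X 0 * X 2 ^ q : MvPolynomial (Fin 3) F) = 0 := by
  subst hq
  simp only [map_sub, map_mul, map_pow, eval_X]
  rw [FiniteField.pow_card, sub_eq_zero]
  by_cases h : y 0 = 0
  · rw [h, zero_pow (by omega), zero_mul]
  · rw [pow_add, pow_one, pow_mul, FiniteField.pow_card_sub_one_eq_one _ h, one_pow, one_mul]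

theorem g3_vanish {q : ℕ} (hq : q = Fintype.card F) (y : Fin 3 → F) :
    eval y (X 0 ^ q * X 1 - X 0 * X 1 ^ q : MvPolynomial (Fin 3) F) = 0 := by
  subst hq
  simp only [map_sub, map_mul, map_pow, eval_X]
  rw [FiniteField.pow_card, FiniteField.pow_card, sub_self]

theorem Jb_vanish {q b : ℕ} (hq : q = Fintype.card F) {p : MvPolynomial (Fin 3) F}
    (hp : p ∈ Jb F q b) (y : Fin 3 → F) : eval y p = 0 := by
  have hle : Jb F q b ≤ RingHom.ker (eval y : MvPolynomial (Fin 3) F →+* F) := by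
    rw [Jb, Ideal.span_le]
    rintro g hg
    simp only [Set.mem_insert_iff, Set.mem_singleton_iff] at hg
    rcases hg with rfl | rfl | rfl
    · exact g1_vanish hq y
    · exact g2_vanish hq y
    · exact g3_vanish hq y
  exact hle hp


/-! ### Weighted homogeneity of the generators -/

theorem g1_WH {q b : ℕ} (hq1 : 1 ≤ q) :
    IsWeightedHomogeneous ![1,1,b] (X 1 ^ ((q - 1) * b + 1) * X 2 - X 1 * X 2 ^ q :
      MvPolynomial (Fin 3) F) (1 + q * b) := by
  have hw1 : (![1,1,b] : Fin 3 → ℕ) 1 = 1 := rfl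
  have hw2 : (![1,1,b] : Fin 3 → ℕ) 2 = b := rfl
  have hqb : ((q - 1) * b + 1) * 1 + b = 1 + q * b := by
    obtain ⟨e, rfl⟩ : ∃ e, q = e + 1 := ⟨q - 1, by omega⟩
    simp only [Nat.add_sub_cancel, mul_one, add_mul, one_mul]
    ring
  rw [← mem_weightedHomogeneousSubmodule]
  apply sub_mem <;> rw [mem_weightedHomogeneousSubmodule]
  · have h := (wh_pow (F := F) (b := b) 1 ((q-1)*b+1)).mul (isWeightedHomogeneous_X F ![1,1,b] 2)
    rw [hw1, hw2, hqb] at h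
    exact h
  · have h := (isWeightedHomogeneous_X F ![1,1,b] 1).mul (wh_pow (F := F) (b := b) 2 q)
    rw [hw1, hw2] at h
    exact h

theorem g2_WH {q b : ℕ} (hq1 : 1 ≤ q) :
    IsWeightedHomogeneous ![1,1,b] (X 0 ^ ((q - 1) * b + 1) * X 2 - X 0 * X 2 ^ q :
      MvPolynomial (Fin 3) F) (1 + q * b) := by
  have hw0 : (![1,1,b] : Fin 3 → ℕ) 0 = 1 := rfl
  have hw2 : (![1,1,b] : Fin 3 → ℕ) 2 = b := rfl
  have hqb : ((q - 1) * b + 1) * 1 + b = 1 + q * b := by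
    obtain ⟨e, rfl⟩ : ∃ e, q = e + 1 := ⟨q - 1, by omega⟩
    simp only [Nat.add_sub_cancel, mul_one, add_mul, one_mul]
    ring
  rw [← mem_weightedHomogeneousSubmodule]
  apply sub_mem <;> rw [mem_weightedHomogeneousSubmodule]
  · have h := (wh_pow (F := F) (b := b) 0 ((q-1)*b+1)).mul (isWeightedHomogeneous_X F ![1,1,b] 2)
    rw [hw0, hw2, hqb] at h
    exact h
  · have h := (isWeightedHomogeneous_X F ![1,1,b] 0).mul (wh_pow (F := F) (b := b) 2 q)
    rw [hw0, hw2] at h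
    exact h

theorem g3_WH {q b : ℕ} :
    IsWeightedHomogeneous ![1,1,b] (X 0 ^ q * X 1 - X 0 * X 1 ^ q :
      MvPolynomial (Fin 3) F) (q + 1) := by
  have hw0 : (![1,1,b] : Fin 3 → ℕ) 0 = 1 := rfl
  have hw1 : (![1,1,b] : Fin 3 → ℕ) 1 = 1 := rfl
  rw [← mem_weightedHomogeneousSubmodule]
  apply sub_mem <;> rw [mem_weightedHomogeneousSubmodule]
  · have h := (wh_pow (F := F) (b := b) 0 q).mul (isWeightedHomogeneous_X F ![1,1,b] 1)
    rw [hw0, hw1, mul_one] at h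
    exact h
  · have h := (isWeightedHomogeneous_X F ![1,1,b] 0).mul (wh_pow (F := F) (b := b) 1 q)
    rw [hw0, hw1, mul_one, Nat.add_comm] at h
    exact h

end P11B

theorem vanishing_ideal_P11b (F : Type) [Field F] [Fintype F] (q : ℕ)
    (hq : q = Fintype.card F) (b : ℕ) (hb : 0 < b) :
    Ideal.span {f : MvPolynomial (Fin 3) F |
        (∃ d : ℕ, IsWeightedHomogeneous ![1, 1, b] f d) ∧
        ∀ y : Fin 3 → F, y ≠ 0 → eval y f = 0} =
    Ideal.span {X 1 ^ ((q - 1) * b + 1) * X 2 - X 1 * X 2 ^ q,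
        X 0 ^ ((q - 1) * b + 1) * X 2 - X 0 * X 2 ^ q,
        X 0 ^ q * X 1 - X 0 * X 1 ^ q} := by
  have hq2 : 2 ≤ q := hq ▸ Fintype.one_lt_card
  apply le_antisymm
  · rw [Ideal.span_le]
    rintro f ⟨⟨d, hWH⟩, hvan⟩
    simp only [SetLike.mem_coe]
    show f ∈ P11B.Jb F q b
    set G : MvPolynomial (Fin 3) F :=
      ∑ u ∈ f.support, monomial (P11B.tr3 (P11B.red q b (u 0) (u 1) (u 2))) (coeff u f) with hG
    have hfG : f - G ∈ P11B.Jb F q b := by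
      nth_rewrite 1 [← support_sum_monomial_coeff f]
      rw [hG, ← Finset.sum_sub_distrib]
      refine sum_mem fun u hu => ?_
      rw [P11B.monomial_eq_prod, P11B.monomial_eq_prod, ← mul_sub]
      refine Ideal.mul_mem_left _ _ ?_
      simpa using P11B.red_mem q b (u 0) (u 1) (u 2)
    have hGsupp : ∀ s ∈ G.support, ∃ u ∈ f.support,
        P11B.tr3 (P11B.red q b (u 0) (u 1) (u 2)) = s := by
      intro s hs
      by_contra hcon
      push_neg at hcon
      apply mem_support_iff.mp hs
      rw [hG, coeff_sum]
      apply Finset.sum_eq_zero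
      intro u hu
      rw [coeff_monomial, if_neg (hcon u hu)]
    have hGdeg : ∀ s ∈ G.support, s 0 + s 1 + b * s 2 = d := by
      intro s hs
      obtain ⟨u, hu, rfl⟩ := hGsupp s hs
      have h1 := P11B.red_deg q b (u 0) (u 1) (u 2)
      have h2 := hWH (mem_support_iff.mp hu)
      rw [P11B.weight3] at h2
      simp only [P11B.tr3_apply0, P11B.tr3_apply1, P11B.tr3_apply2]
      omega
    have hGred : ∀ s ∈ G.support,
        (q ≤ s 2 → s 0 = 0 ∧ s 1 = 0) ∧ (q ≤ s 0 → s 1 = 0) := by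
      intro s hs
      obtain ⟨u, hu, rfl⟩ := hGsupp s hs
      have h1 := P11B.red_reduced q b (u 0) (u 1) (u 2)
      simp only [P11B.tr3_apply0, P11B.tr3_apply1, P11B.tr3_apply2]
      constructor
      · intro h2
        constructor
        · by_contra h; exact h1.2.1 ⟨hq2, h2, by omega⟩
        · by_contra h; exact h1.1 ⟨hq2, h2, by omega⟩
      · intro h2
        by_contra h
        exact h1.2.2 ⟨hq2, h2, by omega⟩
    have hGvan : ∀ y : Fin 3 → F, y ≠ 0 → eval y G = 0 := by
      intro y hy
      have h2 := P11B.Jb_vanish hq hfG y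
      rw [map_sub, hvan y hy, zero_sub, neg_eq_zero] at h2
      exact h2
    have hG0 : G = 0 := P11B.key hq hb G hGdeg hGred hGvan
    rw [hG0, sub_zero] at hfG
    exact hfG
  · rw [Ideal.span_le]
    rintro g hg
    apply Ideal.subset_span
    simp only [Set.mem_insert_iff, Set.mem_singleton_iff] at hg
    simp only [Set.mem_setOf_eq]
    rcases hg with rfl | rfl | rfl
    · exact ⟨⟨1 + q * b, P11B.g1_WH (by omega)⟩, fun y _ => P11B.g1_vanish hq y⟩
    · exact ⟨⟨1 + q * b, P11B.g2_WH (by omega)⟩, fun y _ => P11B.g2_vanish hq y⟩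
    · exact ⟨⟨q + 1, P11B.g3_WH⟩, fun y _ => P11B.g3_vanish hq y⟩
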